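/- Shapovalov form on a Verma module: on M_{q,λ} there is a unique symmetric bilinear form ⟨·,·⟩ with ⟨x_λ, x_λ⟩ = 1 satisfying ⟨e·v, w⟩ = ⟨v, f·w⟩ and ⟨h·v, w⟩ = ⟨v, h·w⟩, and it is given explicitly by ⟨f^n·x_λ, f^m·x_λ⟩ = δ_{m,n} (−1)^n [n]_q! ([−λ]_q)_n. -/
import Mathlib


open Finset

/-- The q-number `[x]_q = (q^{x/2} - q^{-x/2})/(q^{1/2} - q^{-1/2})` (complex powers of `q > 0`). -/
noncomputable def qNumC (q : ℝ) (x : ℂ) : ℂ :=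
  ((q : ℂ) ^ (x / 2) - (q : ℂ) ^ (-x / 2)) / ((q : ℂ) ^ ((1 : ℂ) / 2) - (q : ℂ) ^ (-(1 : ℂ) / 2))

/-- The q-factorial `[k]_q! = ∏_{j=1}^{k} [j]_q`. -/
noncomputable def qFacC (q : ℝ) (k : ℕ) : ℂ := ∏ j ∈ Icc 1 k, qNumC q j

/-- The shifted q-Pochhammer `([a]_q)_k = ∏_{j=0}^{k-1} [a+j]_q`. -/
noncomputable def qShiftC (q : ℝ) (a : ℂ) (k : ℕ) : ℂ := ∏ j ∈ range k, qNumC q (a + j)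

/-- Extend a map on basis vectors (the basis `n ↦ f^n·x_λ` of the Verma module `M_{q,λ}`,
modelled as `ℕ →₀ ℂ`) to a linear endomorphism. -/
noncomputable def opOf (g : ℕ → (ℕ →₀ ℂ)) : (ℕ →₀ ℂ) →ₗ[ℂ] (ℕ →₀ ℂ) :=
  Finsupp.lsum ℂ fun n => LinearMap.toSpanSingleton ℂ (ℕ →₀ ℂ) (g n)

/-- Action of `e` on `M_{q,λ}`: `e·f^n x_λ = [n]_q [λ-n+1]_q f^{n-1} x_λ`. -/
noncomputable def vermaE (q : ℝ) (lam : ℂ) : (ℕ →₀ ℂ) →ₗ[ℂ] (ℕ →₀ ℂ) :=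
  opOf fun n => (qNumC q n * qNumC q (lam - n + 1)) • Finsupp.single (n - 1) 1

/-- Action of `f` on `M_{q,λ}`: `f·f^n x_λ = f^{n+1} x_λ`. -/
noncomputable def vermaF : (ℕ →₀ ℂ) →ₗ[ℂ] (ℕ →₀ ℂ) :=
  opOf fun n => Finsupp.single (n + 1) 1

/-- Action of `h` on `M_{q,λ}`: `h·f^n x_λ = (λ-2n) f^n x_λ`. -/
noncomputable def vermaH (lam : ℂ) : (ℕ →₀ ℂ) →ₗ[ℂ] (ℕ →₀ ℂ) :=
  opOf fun n => (lam - 2 * n) • Finsupp.single n 1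

lemma opOf_single (g : ℕ → (ℕ →₀ ℂ)) (n : ℕ) (a : ℂ) :
    opOf g (Finsupp.single n a) = a • g n := by
  simp [opOf]

lemma vermaE_single (q : ℝ) (lam : ℂ) (n : ℕ) (a : ℂ) :
    vermaE q lam (Finsupp.single n a)
      = a • ((qNumC q n * qNumC q (lam - n + 1)) • Finsupp.single (n - 1) 1) :=
  opOf_single _ n a

lemma vermaF_single (n : ℕ) (a : ℂ) :
    vermaF (Finsupp.single n a) = a • Finsupp.single (n + 1) 1 :=
  opOf_single _ n a

lemma vermaH_single (lam : ℂ) (n : ℕ) (a : ℂ) :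
    vermaH lam (Finsupp.single n a) = a • ((lam - 2 * n) • Finsupp.single n 1) :=
  opOf_single _ n a

lemma qNumC_zero (q : ℝ) : qNumC q 0 = 0 := by
  simp [qNumC]

lemma qNumC_neg (q : ℝ) (x : ℂ) : qNumC q (-x) = -qNumC q x := by
  rw [qNumC, qNumC, neg_neg]
  ring

noncomputable def shapC (q : ℝ) (lam : ℂ) (n : ℕ) : ℂ :=
  (-1 : ℂ) ^ n * qFacC q n * qShiftC q (-lam) n

lemma shapC_zero (q : ℝ) (lam : ℂ) : shapC q lam 0 = 1 := by
  simp [shapC, qFacC, qShiftC]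

lemma shapC_succ (q : ℝ) (lam : ℂ) (n : ℕ) :
    shapC q lam (n + 1) = qNumC q ((n : ℂ) + 1) * qNumC q (lam - n) * shapC q lam n := by
  have h : qNumC q (-lam + (n : ℂ)) = -qNumC q (lam - n) := by
    rw [show (-lam + (n : ℂ)) = -(lam - n) by ring, qNumC_neg]
  unfold shapC qFacC qShiftC
  rw [Finset.prod_Icc_succ_top (by omega), Finset.prod_range_succ, h]
  push_cast
  ring

noncomputable def shapB (q : ℝ) (lam : ℂ) : (ℕ →₀ ℂ) →ₗ[ℂ] (ℕ →₀ ℂ) →ₗ[ℂ] ℂ :=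
  Finsupp.lsum ℂ fun n =>
    LinearMap.toSpanSingleton ℂ ((ℕ →₀ ℂ) →ₗ[ℂ] ℂ) (shapC q lam n • Finsupp.lapply n)

lemma shapB_single_single (q : ℝ) (lam : ℂ) (n m : ℕ) (a b : ℂ) :
    shapB q lam (Finsupp.single n a) (Finsupp.single m b) =
      if m = n then a * b * shapC q lam n else 0 := by
  simp only [shapB, Finsupp.lsum_single, LinearMap.toSpanSingleton_apply,
    LinearMap.smul_apply, Finsupp.lapply_apply, Finsupp.single_apply, smul_eq_mul]
  split <;> ring

lemma bilin_red (B : (ℕ →₀ ℂ) →ₗ[ℂ] (ℕ →₀ ℂ) →ₗ[ℂ] ℂ) (n m : ℕ) (a b : ℂ) :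
    B (Finsupp.single n a) (Finsupp.single m b) =
      a * b * B (Finsupp.single n 1) (Finsupp.single m 1) := by
  rw [show (Finsupp.single n a : ℕ →₀ ℂ) = a • Finsupp.single n 1 by
      simp [Finsupp.smul_single],
    show (Finsupp.single m b : ℕ →₀ ℂ) = b • Finsupp.single m 1 by
      simp [Finsupp.smul_single],
    map_smul]
  simp only [map_smul, LinearMap.smul_apply, smul_eq_mul]
  ring

lemma bilin_ext {B C : (ℕ →₀ ℂ) →ₗ[ℂ] (ℕ →₀ ℂ) →ₗ[ℂ] ℂ}
    (h : ∀ n m, B (Finsupp.single n 1) (Finsupp.single m 1)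
        = C (Finsupp.single n 1) (Finsupp.single m 1)) : B = C := by
  refine Finsupp.lhom_ext fun n a => Finsupp.lhom_ext fun m b => ?_
  rw [bilin_red B, bilin_red C, h]

lemma shap_values (q : ℝ) (lam : ℂ) (B : (ℕ →₀ ℂ) →ₗ[ℂ] (ℕ →₀ ℂ) →ₗ[ℂ] ℂ)
    (h1 : B (Finsupp.single 0 1) (Finsupp.single 0 1) = 1)
    (hE : ∀ v w, B (vermaE q lam v) w = B v (vermaF w))
    (hH : ∀ v w, B (vermaH lam v) w = B v (vermaH lam w)) :
    ∀ n m : ℕ, B (Finsupp.single n 1) (Finsupp.single m 1) =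
      if m = n then shapC q lam n else 0 := by
  have hoff : ∀ n m : ℕ, m ≠ n → B (Finsupp.single n 1) (Finsupp.single m 1) = 0 := by
    intro n m hnm
    have h := hH (Finsupp.single n 1) (Finsupp.single m 1)
    rw [vermaH_single, vermaH_single, one_smul, one_smul,
      map_smul, LinearMap.smul_apply, map_smul] at h
    simp only [smul_eq_mul] at h
    have h2 : ((lam - 2 * n) - (lam - 2 * m)) * B (Finsupp.single n 1) (Finsupp.single m 1) = 0 := by
      rw [sub_mul, h, sub_self]
    have h3 : ((lam - 2 * n) - (lam - 2 * m)) ≠ 0 := by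
      intro hc
      apply hnm
      have : (2 : ℂ) * m = 2 * n := by linear_combination hc
      have : (m : ℂ) = n := by linear_combination this / 2
      exact_mod_cast this
    exact (mul_eq_zero.mp h2).resolve_left h3
  have hdiag : ∀ n : ℕ, B (Finsupp.single n 1) (Finsupp.single n 1) = shapC q lam n := by
    intro n
    induction n with
    | zero => rw [h1, shapC_zero]
    | succ k ih =>
      have hF : vermaF (Finsupp.single k 1) = Finsupp.single (k + 1) 1 := by
        rw [vermaF_single, one_smul]
      have hEk : vermaE q lam (Finsupp.single (k + 1) 1)
          = (qNumC q ((k : ℂ) + 1) * qNumC q (lam - k)) • Finsupp.single k 1 := by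
        rw [vermaE_single, one_smul]
        have e1 : (((k + 1 : ℕ)) : ℂ) = (k : ℂ) + 1 := by push_cast; ring
        have e2 : lam - (((k + 1 : ℕ)) : ℂ) + 1 = lam - k := by push_cast; ring
        rw [e2, e1]
        norm_num
      calc B (Finsupp.single (k + 1) 1) (Finsupp.single (k + 1) 1)
          = B (Finsupp.single (k + 1) 1) (vermaF (Finsupp.single k 1)) := by rw [hF]
        _ = B (vermaE q lam (Finsupp.single (k + 1) 1)) (Finsupp.single k 1) := (hE _ _).symm
        _ = (qNumC q ((k : ℂ) + 1) * qNumC q (lam - k)) *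
              B (Finsupp.single k 1) (Finsupp.single k 1) := by
            rw [hEk, map_smul, LinearMap.smul_apply, smul_eq_mul]
        _ = shapC q lam (k + 1) := by rw [ih, shapC_succ]
  intro n m
  split_ifs with h
  · subst h; exact hdiag m
  · exact hoff n m h

/-- On the Verma module `M_{q,λ}` there is a unique symmetric bilinear form with
`⟨x_λ, x_λ⟩ = 1`, `⟨e·v, w⟩ = ⟨v, f·w⟩` and `⟨h·v, w⟩ = ⟨v, h·w⟩` (the Shapovalov form),
and it satisfies `⟨f^n·x_λ, f^m·x_λ⟩ = δ_{m,n} (-1)^n [n]_q! ([-λ]_q)_n`. -/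
theorem shapovalov_form (q : ℝ) (hq0 : 0 < q) (hq1 : q < 1) (lam : ℂ) :
    (∃! B : (ℕ →₀ ℂ) →ₗ[ℂ] (ℕ →₀ ℂ) →ₗ[ℂ] ℂ,
      (∀ v w, B v w = B w v) ∧
      B (Finsupp.single 0 1) (Finsupp.single 0 1) = 1 ∧
      (∀ v w, B (vermaE q lam v) w = B v (vermaF w)) ∧
      (∀ v w, B (vermaH lam v) w = B v (vermaH lam w))) ∧
    (∀ B : (ℕ →₀ ℂ) →ₗ[ℂ] (ℕ →₀ ℂ) →ₗ[ℂ] ℂ,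
      (∀ v w, B v w = B w v) →
      B (Finsupp.single 0 1) (Finsupp.single 0 1) = 1 →
      (∀ v w, B (vermaE q lam v) w = B v (vermaF w)) →
      (∀ v w, B (vermaH lam v) w = B v (vermaH lam w)) →
      ∀ n m : ℕ, B (Finsupp.single n 1) (Finsupp.single m 1) =
        if m = n then (-1 : ℂ) ^ n * qFacC q n * qShiftC q (-lam) n else 0) := by
  -- symmetry of shapB
  have hsym0 : shapB q lam = (shapB q lam).flip := by
    apply bilin_ext
    intro n m
    rw [LinearMap.flip_apply, shapB_single_single, shapB_single_single]
    by_cases h : m = n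
    · subst h; simp
    · simp [h, Ne.symm h]
  have hsym : ∀ v w, shapB q lam v w = shapB q lam w v := by
    intro v w
    conv_lhs => rw [hsym0]
    rfl
  -- normalization
  have hone : shapB q lam (Finsupp.single 0 1) (Finsupp.single 0 1) = 1 := by
    rw [shapB_single_single]
    simp [shapC_zero]
  -- e/f adjointness on basis vectors
  have hE0 : ∀ n m : ℕ, shapB q lam (vermaE q lam (Finsupp.single n 1)) (Finsupp.single m 1)
      = shapB q lam (Finsupp.single n 1) (vermaF (Finsupp.single m 1)) := by
    intro n m
    rw [vermaE_single, one_smul, vermaF_single, one_smul, map_smul, LinearMap.smul_apply,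
      smul_eq_mul, shapB_single_single, shapB_single_single]
    cases n with
    | zero =>
      have h0 : qNumC q ((0 : ℕ) : ℂ) = 0 := by rw [Nat.cast_zero, qNumC_zero]
      rw [h0, zero_mul, zero_mul]
      simp
    | succ k =>
      simp only [Nat.add_sub_cancel, Nat.succ_eq_add_one]
      by_cases hm : m = k
      · subst hm
        simp only [if_pos rfl, one_mul, mul_one]
        rw [shapC_succ]
        push_cast
        ring
      · have hm2 : ¬ (m + 1 = k + 1) := fun h => hm (by omega)
        simp [hm, hm2]
  have hEeq : (shapB q lam).comp (vermaE q lam) = (shapB q lam).compl₂ vermaF := by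
    apply bilin_ext
    intro n m
    simpa only [LinearMap.comp_apply, LinearMap.compl₂_apply] using hE0 n m
  have hEprop : ∀ v w, shapB q lam (vermaE q lam v) w = shapB q lam v (vermaF w) := by
    intro v w
    have h := LinearMap.ext_iff.mp (LinearMap.ext_iff.mp hEeq v) w
    simpa only [LinearMap.comp_apply, LinearMap.compl₂_apply] using h
  -- h self-adjointness
  have hH0 : ∀ n m : ℕ, shapB q lam (vermaH lam (Finsupp.single n 1)) (Finsupp.single m 1)
      = shapB q lam (Finsupp.single n 1) (vermaH lam (Finsupp.single m 1)) := by
    intro n m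
    rw [vermaH_single, vermaH_single, one_smul, one_smul, map_smul, LinearMap.smul_apply,
      map_smul, smul_eq_mul, smul_eq_mul, shapB_single_single]
    by_cases h : m = n
    · subst h; ring
    · simp [h]
  have hHeq : (shapB q lam).comp (vermaH lam) = (shapB q lam).compl₂ (vermaH lam) := by
    apply bilin_ext
    intro n m
    simpa only [LinearMap.comp_apply, LinearMap.compl₂_apply] using hH0 n m
  have hHprop : ∀ v w, shapB q lam (vermaH lam v) w = shapB q lam v (vermaH lam w) := by
    intro v w
    have h := LinearMap.ext_iff.mp (LinearMap.ext_iff.mp hHeq v) w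
    simpa only [LinearMap.comp_apply, LinearMap.compl₂_apply] using h
  constructor
  · refine ⟨shapB q lam, ⟨hsym, hone, hEprop, hHprop⟩, ?_⟩
    rintro B' ⟨_, h1', hE', hH'⟩
    apply bilin_ext
    intro n m
    rw [shap_values q lam B' h1' hE' hH' n m,
      shap_values q lam (shapB q lam) hone hEprop hHprop n m]
  · intro B _ h1 hE hH n m
    have h := shap_values q lam B h1 hE hH n m
    rw [h]
    simp only [shapC]
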